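/- Let $c \in (0,1]$ and let $r \ge 1$ and $\sigma_1 > \dots > \sigma_r > c^{1/4}$. For the weighted spectral estimator with limiting SURE value $S(w) = \sum_{k=1}^r \left[\rho(\sigma_k)^2 (w_k - 1)^2 + 2 w_k \frac{\sigma_k^2(1+c)+2c}{\sigma_k^2}\right]$, the unique global minimizer over $w \in \mathbb{R}^r$ is $w_k^\ast = 1 - \frac{\sigma_k^2(1+c)+2c}{\sigma_k^2 \rho(\sigma_k)^2}$ for each $k$, and each $w_k^\ast$ lies in $(0,1)$. -/

import Mathlib

open Real

/-- The spiked-model map from a population singular value to the asymptotic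
location of the corresponding empirical singular value. -/
noncomputable def rho (c σ : ℝ) : ℝ :=
  Real.sqrt ((1 + σ ^ 2) * (c + σ ^ 2) / σ ^ 2)

/-- The limiting SURE criterion for weighted spectral estimators is uniquely
minimized over `ℝ^r` at `w⋆ₖ = 1 - (σₖ²(1+c)+2c)/(σₖ²ρ(σₖ)²)`, and each
optimal weight lies in `(0,1)`. -/
theorem limiting_sure_global_minimizer
    (c : ℝ) (hc : c ∈ Set.Ioc (0 : ℝ) 1)
    (r : ℕ) (hr : 1 ≤ r) (σ : Fin r → ℝ)
    (hσdec : StrictAnti σ) (hσ : ∀ k, c ^ ((1 : ℝ) / 4) < σ k)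
    (S : (Fin r → ℝ) → ℝ)
    (hS : S = fun w => ∑ k, ((rho c (σ k)) ^ 2 * (w k - 1) ^ 2
        + 2 * w k * ((σ k ^ 2 * (1 + c) + 2 * c) / σ k ^ 2)))
    (wstar : Fin r → ℝ)
    (hw : wstar = fun k =>
        1 - (σ k ^ 2 * (1 + c) + 2 * c) / (σ k ^ 2 * (rho c (σ k)) ^ 2)) :
    (∀ k, wstar k ∈ Set.Ioo (0 : ℝ) 1) ∧
    (∀ w : Fin r → ℝ, w ≠ wstar → S wstar < S w) := by
  obtain ⟨hc0, hc1⟩ := hc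
  have hσpos : ∀ k, 0 < σ k := fun k =>
    lt_trans (Real.rpow_pos_of_pos hc0 _) (hσ k)
  have hs2 : ∀ k, (0:ℝ) < σ k ^ 2 := fun k => pow_pos (hσpos k) 2
  have hc4 : (c ^ ((1:ℝ)/4)) ^ (4:ℕ) = c := by
    rw [← Real.rpow_natCast (c ^ ((1:ℝ)/4)) 4, ← Real.rpow_mul hc0.le]
    norm_num
  have h4 : ∀ k, c < σ k ^ 4 := by
    intro k
    have := pow_lt_pow_left₀ (hσ k) (Real.rpow_pos_of_pos hc0 _).le (n := 4) (by norm_num)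
    rwa [hc4] at this
  have hrho : ∀ k, rho c (σ k) ^ 2 = (1 + σ k ^ 2) * (c + σ k ^ 2) / σ k ^ 2 := by
    intro k
    have h := hσpos k
    exact Real.sq_sqrt (by positivity)
  have hrhopos : ∀ k, 0 < rho c (σ k) ^ 2 := by
    intro k
    rw [hrho k]
    have h := hσpos k
    positivity
  have hD : ∀ k, σ k ^ 2 * rho c (σ k) ^ 2 = (1 + σ k ^ 2) * (c + σ k ^ 2) := by
    intro k
    rw [hrho k]
    field_simp
    exact div_self (hσpos k).ne'
  constructor
  · intro k
    have hBpos : 0 < σ k ^ 2 * (1 + c) + 2 * c := by nlinarith [hs2 k]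
    have hDpos : 0 < σ k ^ 2 * rho c (σ k) ^ 2 := mul_pos (hs2 k) (hrhopos k)
    have hBD : σ k ^ 2 * (1 + c) + 2 * c < σ k ^ 2 * rho c (σ k) ^ 2 := by
      rw [hD k]; nlinarith [h4 k, hs2 k]
    constructor
    · rw [hw]
      simp only [sub_pos]
      exact (div_lt_one hDpos).mpr hBD
    · rw [hw]
      simp only [sub_lt_self_iff]
      positivity
  · intro w hne
    subst hS
    have hterm : ∀ k x,
        rho c (σ k) ^ 2 * (x - 1) ^ 2 + 2 * x * ((σ k ^ 2 * (1 + c) + 2 * c) / σ k ^ 2)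
        = (rho c (σ k) ^ 2 * (wstar k - 1) ^ 2
            + 2 * wstar k * ((σ k ^ 2 * (1 + c) + 2 * c) / σ k ^ 2))
          + rho c (σ k) ^ 2 * (x - wstar k) ^ 2 := by
      intro k x
      have h1 : (σ k ^ 2 : ℝ) ≠ 0 := (hs2 k).ne'
      have h2 : rho c (σ k) ^ 2 ≠ 0 := (hrhopos k).ne'
      have hwk : wstar k = 1 - (σ k ^ 2 * (1 + c) + 2 * c) / (σ k ^ 2 * rho c (σ k) ^ 2) := by
        rw [hw]
      have h1' : σ k ≠ 0 := (hσpos k).ne'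
      have h2' : rho c (σ k) ≠ 0 := fun h => h2 (by rw [h]; ring)
      rw [hwk]
      field_simp
      ring
    have hsum : (∑ k, (rho c (σ k) ^ 2 * (w k - 1) ^ 2
            + 2 * w k * ((σ k ^ 2 * (1 + c) + 2 * c) / σ k ^ 2)))
        = (∑ k, (rho c (σ k) ^ 2 * (wstar k - 1) ^ 2
            + 2 * wstar k * ((σ k ^ 2 * (1 + c) + 2 * c) / σ k ^ 2)))
          + ∑ k, rho c (σ k) ^ 2 * (w k - wstar k) ^ 2 := by
      rw [← Finset.sum_add_distrib]
      exact Finset.sum_congr rfl fun k _ => hterm k (w k)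
    simp only [hsum]
    have : 0 < ∑ k, rho c (σ k) ^ 2 * (w k - wstar k) ^ 2 := by
      obtain ⟨k0, hk0⟩ := Function.ne_iff.mp hne
      refine Finset.sum_pos' (fun k _ => by positivity) ⟨k0, Finset.mem_univ _, ?_⟩
      have h0 : w k0 - wstar k0 ≠ 0 := sub_ne_zero_of_ne hk0
      exact mul_pos (hrhopos k0) (pow_two_pos_of_ne_zero h0)
    linarith
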